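/- arXiv:1611.00989 — 2 statements merged into one kernel-verified Lean document; each statement's English description precedes it below -/
import Mathlib

section
/- Let n ≥ 2 and let X : ℝⁿ → ℝⁿ be a C² diffeomorphism whose Jacobian determinant J(x) = det DX(x) is positive everywhere. Let F : ℝⁿ → ℝⁿ be a C¹ vector field and set F̄ = F ∘ X. Then for every x ∈ ℝⁿ, (div F)(X(x)) = J(x)⁻¹ div( adj(DX) F̄ )(x), where adj(DX) F̄ denotes the pointwise matrix–vector product and div on the right is the usual divergence of a vector field. In particular, div F ≡ 0 if and only if div( adj(DX) F̄ ) ≡ 0. -/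
open scoped BigOperators
open MeasureTheory

/-- Partial derivative `∂ᵢ f` of a scalar function at a point `x`. -/
noncomputable def pd {n : ℕ} (i : Fin n) (f : (Fin n → ℝ) → ℝ) (x : Fin n → ℝ) : ℝ :=
  fderiv ℝ f x (Pi.single i 1)

/-- Gradient of a scalar function. -/
noncomputable def grad {n : ℕ} (f : (Fin n → ℝ) → ℝ) (x : Fin n → ℝ) : Fin n → ℝ :=
  fun i => pd i f x

/-- Laplacian of a scalar function. -/
noncomputable def lap {n : ℕ} (f : (Fin n → ℝ) → ℝ) (x : Fin n → ℝ) : ℝ :=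
  ∑ i, pd i (pd i f) x

/-- Squared euclidean norm of the gradient, `|∇f|² = ∑ᵢ (∂ᵢf)²`. -/
noncomputable def gradNormSq {n : ℕ} (f : (Fin n → ℝ) → ℝ) (x : Fin n → ℝ) : ℝ :=
  ∑ i, (pd i f x) ^ 2

/-- Divergence of a matrix-valued field: `(matDiv M x)ᵢ = ∑ⱼ ∂ⱼ Mⱼᵢ`. -/
noncomputable def matDiv {n : ℕ} (M : (Fin n → ℝ) → Matrix (Fin n) (Fin n) ℝ)
    (x : Fin n → ℝ) : Fin n → ℝ :=
  fun i => ∑ j, pd j (fun y => M y j i) x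

/-- Divergence of a vector field: `vecDiv F x = ∑ᵢ ∂ᵢ Fᵢ`. -/
noncomputable def vecDiv {n : ℕ} (F : (Fin n → ℝ) → (Fin n → ℝ)) (x : Fin n → ℝ) : ℝ :=
  ∑ i, pd i (fun y => F y i) x

/-- Jacobian matrix of a vector field: `(jacM F x)ᵢⱼ = ∂ⱼ Fᵢ`. -/
noncomputable def jacM {n : ℕ} (F : (Fin n → ℝ) → (Fin n → ℝ)) (x : Fin n → ℝ) :
    Matrix (Fin n) (Fin n) ℝ :=
  Matrix.of fun i j => pd j (fun y => F y i) x

section Aux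

variable {n : ℕ}

lemma updCol_comm (A : Matrix (Fin n) (Fin n) ℝ) {i l : Fin n} (h : i ≠ l) (u v : Fin n → ℝ) :
    (A.updateCol i u).updateCol l v = (A.updateCol l v).updateCol i u := by
  ext k m
  simp only [Matrix.updateCol_apply]
  rcases eq_or_ne m l with rfl | hm <;> rcases eq_or_ne m i with rfl | hm2 <;> simp_all

lemma det_upd2_zero (A : Matrix (Fin n) (Fin n) ℝ) {i l : Fin n} (h : i ≠ l) (w : Fin n → ℝ) :
    ((A.updateCol i w).updateCol l w).det = 0 := by
  refine Matrix.det_zero_of_column_eq h ?_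
  intro k
  simp [Matrix.updateCol_apply, h, h.symm]

lemma det_swap_col (A : Matrix (Fin n) (Fin n) ℝ) {i l : Fin n} (h : i ≠ l) (u v : Fin n → ℝ) :
    ((A.updateCol i u).updateCol l v).det
      = - ((A.updateCol i v).updateCol l u).det := by
  have h0 := det_upd2_zero A h (u + v)
  rw [Matrix.det_updateCol_add] at h0
  rw [updCol_comm A h (u+v) u, updCol_comm A h (u+v) v] at h0
  rw [Matrix.det_updateCol_add, Matrix.det_updateCol_add] at h0
  rw [← updCol_comm A h u u, ← updCol_comm A h v u, ← updCol_comm A h u v,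
    ← updCol_comm A h v v] at h0
  rw [det_upd2_zero A h u, det_upd2_zero A h v] at h0
  linarith

lemma updCol_updCol_same (A : Matrix (Fin n) (Fin n) ℝ) (i : Fin n) (u v : Fin n → ℝ) :
    (A.updateCol i u).updateCol i v = A.updateCol i v := by
  ext k m
  simp only [Matrix.updateCol_apply]
  split <;> rfl

lemma hasFDerivAt_det' {M : (Fin n → ℝ) → Matrix (Fin n) (Fin n) ℝ}
    {M' : Fin n → Fin n → (Fin n → ℝ) →L[ℝ] ℝ} {x : Fin n → ℝ}
    (h : ∀ k l, HasFDerivAt (fun y => M y k l) (M' k l) x) :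
    HasFDerivAt (fun y => (M y).det)
      (∑ σ : Equiv.Perm (Fin n), (((Equiv.Perm.sign σ : ℤ) : ℝ)) •
        ∑ l, (∏ m ∈ Finset.univ.erase l, M x (σ m) m) • M' (σ l) l) x := by
  have : (fun y => (M y).det)
      = fun y => ∑ σ : Equiv.Perm (Fin n),
          (((Equiv.Perm.sign σ : ℤ) : ℝ)) * ∏ m, M y (σ m) m := by
    funext y
    rw [Matrix.det_apply]
    congr 1; funext σ
    simp [Units.smul_def, zsmul_eq_mul]
  rw [this]
  apply HasFDerivAt.fun_sum
  intro σ _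
  exact (HasFDerivAt.finset_prod (fun m _ => h (σ m) m)).const_mul _

lemma pd_det {M : (Fin n → ℝ) → Matrix (Fin n) (Fin n) ℝ}
    {M' : Fin n → Fin n → (Fin n → ℝ) →L[ℝ] ℝ} {x : Fin n → ℝ}
    (h : ∀ k l, HasFDerivAt (fun y => M y k l) (M' k l) x) (i : Fin n) :
    pd i (fun y => (M y).det) x
      = ∑ l, ((M x).updateCol l (fun k => M' k l (Pi.single i 1))).det := by
  rw [pd, (hasFDerivAt_det' h).fderiv]
  simp only [ContinuousLinearMap.coe_sum', Finset.sum_apply, ContinuousLinearMap.coe_smul',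
    Pi.smul_apply, smul_eq_mul]
  rw [Finset.sum_congr rfl (fun σ _ => Finset.mul_sum _ _ _), Finset.sum_comm]
  congr 1; funext l
  rw [Matrix.det_apply]
  congr 1; funext σ
  rw [Units.smul_def, zsmul_eq_mul]
  have : ∏ m, (M x).updateCol l (fun k => M' k l (Pi.single i 1)) (σ m) m
      = (M' (σ l) l (Pi.single i 1)) * ∏ m ∈ Finset.univ.erase l, M x (σ m) m := by
    rw [← Finset.mul_prod_erase _ _ (Finset.mem_univ l)]
    congr 1
    · simp [Matrix.updateCol_apply]
    · exact Finset.prod_congr rfl fun m hm => by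
        simp [Matrix.updateCol_apply, (Finset.mem_erase.mp hm).1]
  rw [this]; ring

lemma fderiv_pd {f : (Fin n → ℝ) → ℝ} (hf : ContDiff ℝ 2 f) (l : Fin n) (x : Fin n → ℝ) :
    fderiv ℝ (pd l f) x = (fderiv ℝ (fderiv ℝ f) x).flip (Pi.single l 1) := by
  have hdf : ContDiff ℝ 1 (fderiv ℝ f) := hf.fderiv_right (by norm_num)
  have : pd l f
      = fun y => (fderiv ℝ f y) ((fun _ : Fin n → ℝ => (Pi.single l 1 : Fin n → ℝ)) y) := rfl
  rw [this, fderiv_clm_apply (hdf.differentiable one_ne_zero x) (differentiableAt_const _)]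
  simp

lemma pd_pd_comm {f : (Fin n → ℝ) → ℝ} (hf : ContDiff ℝ 2 f) (i l : Fin n) (x : Fin n → ℝ) :
    pd i (pd l f) x = pd l (pd i f) x := by
  have hs : IsSymmSndFDerivAt ℝ f x := hf.contDiffAt.isSymmSndFDerivAt (by norm_num)
  rw [pd, pd, fderiv_pd hf, fderiv_pd hf]
  exact hs _ _

lemma clm_apply_sum (L : (Fin n → ℝ) →L[ℝ] ℝ) (v : Fin n → ℝ) :
    L v = ∑ k, v k * L (Pi.single k 1) := by
  have hv : v = ∑ k, v k • (Pi.single k 1 : Fin n → ℝ) := by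
    funext j
    simp [Pi.single_apply, Finset.sum_ite_eq']
  conv_lhs => rw [hv]
  rw [map_sum]
  exact Finset.sum_congr rfl fun k _ => by rw [L.map_smul]; simp

lemma pd_comp {f : (Fin n → ℝ) → ℝ} {e : (Fin n → ℝ) → (Fin n → ℝ)}
    (hf : ContDiff ℝ 1 f) (he : ContDiff ℝ 1 e) (i : Fin n) (x : Fin n → ℝ) :
    pd i (fun y => f (e y)) x
      = ∑ k, pd i (fun y => e y k) x * pd k f (e x) := by
  have : (fun y => f (e y)) = f ∘ e := rfl
  rw [pd, this, fderiv_comp x (hf.differentiable one_ne_zero _) (he.differentiable one_ne_zero _),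
    ContinuousLinearMap.comp_apply, clm_apply_sum]
  congr 1; funext k
  congr 2
  have hcoord : ∀ j, DifferentiableAt ℝ (fun y => e y j) x :=
    fun j => (differentiableAt_pi.mp (he.differentiable one_ne_zero x)) j
  have he2 : e = fun y j => e y j := rfl
  rw [pd, he2, fderiv_pi hcoord]
  rfl

lemma adj_sum_eq_det (A : Matrix (Fin n) (Fin n) ℝ) (b : Fin n → ℝ) (i : Fin n) :
    ∑ j, A.adjugate i j * b j = (A.updateCol i b).det := by
  rw [← Matrix.cramer_apply, Matrix.cramer_eq_adjugate_mulVec]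
  simp [Matrix.mulVec, dotProduct]

lemma sum_erase_antisymm (T : Fin n → Fin n → ℝ) (h : ∀ i l, i ≠ l → T i l = - T l i) :
    ∑ i, ∑ l ∈ Finset.univ.erase i, T i l = 0 := by
  have key : ∀ i, ∑ l ∈ Finset.univ.erase i, T i l
      = ∑ l, (if l = i then 0 else T i l) := by
    intro i
    rw [← Finset.add_sum_erase Finset.univ _ (Finset.mem_univ i), if_pos rfl, zero_add]
    exact Finset.sum_congr rfl fun l hl => (if_neg (Finset.mem_erase.mp hl).1).symm
  simp only [key]
  have anti : ∀ i l, (if l = i then (0:ℝ) else T i l) = - (if i = l then 0 else T l i) := by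
    intro i l
    rcases eq_or_ne l i with rfl | hl
    · simp
    · rw [if_neg hl, if_neg (Ne.symm hl), h i l (Ne.symm hl)]
  have : (∑ i, ∑ l, (if l = i then (0:ℝ) else T i l))
      = - ∑ i, ∑ l, (if l = i then (0:ℝ) else T i l) := by
    conv_lhs => rw [Finset.sum_comm]
    rw [← Finset.sum_neg_distrib]
    exact Finset.sum_congr rfl fun l _ => by
      rw [← Finset.sum_neg_distrib]
      exact Finset.sum_congr rfl fun i _ => by rw [anti i l]
  linarith

end Aux

/-- for a C² diffeomorphism `X` with positive Jacobian determinant `J`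
and a C¹ vector field `F` with `F̄ = F ∘ X`, one has
`(div F) ∘ X = J⁻¹ div(adj(DX) F̄)`; in particular `div F ≡ 0` iff
`div(adj(DX) F̄) ≡ 0`. -/
theorem div_lagrangian_change_of_variables {n : ℕ} (hn : 2 ≤ n)
    (e : (Fin n → ℝ) ≃ (Fin n → ℝ))
    (hX : ContDiff ℝ 2 ⇑e) (hXinv : ContDiff ℝ 2 ⇑e.symm)
    (hJ : ∀ x, 0 < (jacM (⇑e) x).det)
    (F : (Fin n → ℝ) → (Fin n → ℝ)) (hF : ContDiff ℝ 1 F) :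
    (∀ x, vecDiv F (e x)
        = ((jacM (⇑e) x).det)⁻¹ *
            ∑ i, pd i (fun y => ∑ j, (jacM (⇑e) y).adjugate i j * F (e y) j) x)
    ∧ ((∀ y, vecDiv F y = 0) ↔
        (∀ x, ∑ i, pd i (fun y => ∑ j, (jacM (⇑e) y).adjugate i j * F (e y) j) x = 0)) := by
  classical
  -- coordinate functions
  have hek : ∀ k, ContDiff ℝ 2 (fun y => e y k) := fun k => contDiff_pi.mp hX k
  have hentry : ∀ k l, ContDiff ℝ 1 (fun y => jacM (⇑e) y k l) := by
    intro k l
    have hrw : (fun y => jacM (⇑e) y k l)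
        = fun y => (fderiv ℝ (fun z => e z k) y) (Pi.single l 1) := rfl
    rw [hrw]
    exact ((hek k).fderiv_right (by norm_num)).clm_apply contDiff_const
  have hFbar : ∀ j, ContDiff ℝ 1 (fun y => F (e y) j) :=
    fun j => (contDiff_pi.mp hF j).comp (hX.of_le one_le_two)
  have key : ∀ x, (∑ i, pd i (fun y => ∑ j, (jacM (⇑e) y).adjugate i j * F (e y) j) x)
      = (jacM (⇑e) x).det * vecDiv F (e x) := by
    intro x
    set A : Matrix (Fin n) (Fin n) ℝ := jacM (⇑e) x with hAdef
    set M' : Fin n → Fin n → (Fin n → ℝ) →L[ℝ] ℝ :=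
      fun k l => fderiv ℝ (fun y => jacM (⇑e) y k l) x with hM'def
    set DF : Fin n → (Fin n → ℝ) →L[ℝ] ℝ :=
      fun k => fderiv ℝ (fun y => F (e y) k) x with hDFdef
    have hM' : ∀ k l, HasFDerivAt (fun y => jacM (⇑e) y k l) (M' k l) x :=
      fun k l => ((hentry k l).differentiable one_ne_zero x).hasFDerivAt
    have hDF : ∀ k, HasFDerivAt (fun y => F (e y) k) (DF k) x :=
      fun k => ((hFbar k).differentiable one_ne_zero x).hasFDerivAt
    -- rewrite the summands as determinants
    have hfun : ∀ i : Fin n, (fun y => ∑ j, (jacM (⇑e) y).adjugate i j * F (e y) j)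
        = fun y => ((jacM (⇑e) y).updateCol i (fun k => F (e y) k)).det := by
      intro i; funext y; rw [adj_sum_eq_det]
    -- derivative of the entries of the modified matrix
    set P : Fin n → Fin n → Fin n → (Fin n → ℝ) →L[ℝ] ℝ :=
      fun i k l => if l = i then DF k else M' k l with hPdef
    have hN : ∀ i k l, HasFDerivAt
        (fun y => ((jacM (⇑e) y).updateCol i (fun k' => F (e y) k')) k l) (P i k l) x := by
      intro i k l
      have hrw : (fun y => ((jacM (⇑e) y).updateCol i (fun k' => F (e y) k')) k l)
          = if l = i then (fun y => F (e y) k) else (fun y => jacM (⇑e) y k l) := by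
        by_cases h : l = i <;> simp [Matrix.updateCol_apply, h]
      rw [hrw]
      by_cases h : l = i
      · rw [if_pos h, hPdef]; simpa [h] using hDF k
      · rw [if_neg h, hPdef]; simpa [h] using hM' k l
    -- apply the determinant derivative formula
    have hpd : ∀ i : Fin n, pd i (fun y => ∑ j, (jacM (⇑e) y).adjugate i j * F (e y) j) x
        = ∑ l, (((A.updateCol i (fun k => F (e x) k))).updateCol l
            (fun k => P i k l (Pi.single i 1))).det := by
      intro i
      rw [hfun i]
      exact pd_det (hN i) i
    simp only [hpd]
    -- split diagonal and off-diagonal parts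
    have split : ∀ i : Fin n,
        (∑ l, (((A.updateCol i (fun k => F (e x) k))).updateCol l
            (fun k => P i k l (Pi.single i 1))).det)
        = (A.updateCol i (fun k => pd i (fun y => F (e y) k) x)).det
          + ∑ l ∈ Finset.univ.erase i,
              (((A.updateCol i (fun k => F (e x) k))).updateCol l
                (fun k => M' k l (Pi.single i 1))).det := by
      intro i
      rw [← Finset.add_sum_erase Finset.univ _ (Finset.mem_univ i)]
      congr 1
      · rw [updCol_updCol_same]
        congr 1
        funext k
        rw [hPdef]
        simp only [if_pos rfl]
        rfl
      · exact Finset.sum_congr rfl fun l hl => by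
          rw [hPdef]; simp only [if_neg (Finset.mem_erase.mp hl).1]
    simp only [split, Finset.sum_add_distrib]
    -- off-diagonal part vanishes by symmetry of second derivatives
    have hsymm : ∀ i l k, M' k l (Pi.single i 1) = M' k i (Pi.single l 1) := by
      intro i l k
      have h1 : pd i (pd l (fun z => e z k)) x = M' k l (Pi.single i 1) := by
        rw [pd, show (pd l (fun z => e z k)) = (fun y => jacM (⇑e) y k l) from rfl,
          (hM' k l).fderiv]
      have h2 : pd l (pd i (fun z => e z k)) x = M' k i (Pi.single l 1) := by
        rw [pd, show (pd i (fun z => e z k)) = (fun y => jacM (⇑e) y k i) from rfl,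
          (hM' k i).fderiv]
      rw [← h1, ← h2, pd_pd_comm (hek k)]
    have hoff : (∑ i, ∑ l ∈ Finset.univ.erase i,
        (((A.updateCol i (fun k => F (e x) k))).updateCol l
          (fun k => M' k l (Pi.single i 1))).det) = 0 := by
      apply sum_erase_antisymm
      intro i l hil
      have hcol : (fun k => M' k l (Pi.single i 1)) = fun k => M' k i (Pi.single l 1) :=
        funext fun k => hsymm i l k
      rw [hcol, det_swap_col A hil, updCol_comm A hil]
    rw [hoff, add_zero]
    -- diagonal part gives the divergence
    have hdiag : ∀ i : Fin n,
        (A.updateCol i (fun k => pd i (fun y => F (e y) k) x)).det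
        = ∑ j, A.adjugate i j * pd i (fun y => F (e y) j) x := by
      intro i; rw [adj_sum_eq_det]
    simp only [hdiag]
    have hchain : ∀ i j, pd i (fun y => F (e y) j) x
        = ∑ k, A k i * pd k (fun z => F z j) (e x) := by
      intro i j
      rw [pd_comp (contDiff_pi.mp hF j) (hX.of_le one_le_two)]
      rfl
    calc ∑ i, ∑ j, A.adjugate i j * pd i (fun y => F (e y) j) x
        = ∑ j, ∑ k, (∑ i, A k i * A.adjugate i j) * pd k (fun z => F z j) (e x) := by
          simp only [hchain]
          rw [Finset.sum_comm]
          refine Finset.sum_congr rfl fun j _ => ?_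
          rw [Finset.sum_congr rfl fun i (_ : i ∈ Finset.univ) => Finset.mul_sum
            Finset.univ (fun k => A k i * pd k (fun z => F z j) (e x)) (A.adjugate i j),
            Finset.sum_comm]
          refine Finset.sum_congr rfl fun k _ => ?_
          rw [Finset.sum_mul]
          refine Finset.sum_congr rfl fun i _ => by ring
      _ = ∑ j, ∑ k, (if k = j then A.det else 0) * pd k (fun z => F z j) (e x) := by
          refine Finset.sum_congr rfl fun j _ => Finset.sum_congr rfl fun k _ => ?_
          congr 1
          have := congrArg (fun B => B k j) (Matrix.mul_adjugate A)
          simp only [Matrix.mul_apply] at this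
          rw [this]
          simp [Matrix.one_apply]
      _ = A.det * vecDiv F (e x) := by
          rw [vecDiv, Finset.mul_sum]
          refine Finset.sum_congr rfl fun j _ => ?_
          simp only [ite_mul, zero_mul]
          rw [Finset.sum_ite_eq' Finset.univ j]
          simp
  refine ⟨fun x => ?_, ⟨fun h x => ?_, fun h y => ?_⟩⟩
  · rw [key x, inv_mul_cancel_left₀ (ne_of_gt (hJ x))]
  · rw [key x, h (e x), mul_zero]
  · have := h (e.symm y)
    rw [key (e.symm y), Equiv.apply_symm_apply] at this
    exact (mul_eq_zero.mp this).resolve_left (ne_of_gt (hJ _))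
end

section
/- Let n ≥ 2 and let X : ℝⁿ → ℝⁿ be a C² diffeomorphism with J(x) = det DX(x) > 0 everywhere. Let F : ℝⁿ → ℝⁿ be a C¹ vector field and F̄ = F ∘ X. Then for every x ∈ ℝⁿ, J(x)⁻¹ div( adj(DX) F̄ )(x) = tr( D F̄(x) · (DX(x))⁻¹ ) = Σᵢⱼ (D F̄(x))ᵢⱼ ((DX(x))⁻¹)ⱼᵢ. Consequently (div F) ∘ X = D F̄ : (DX)⁻¹ in the sense of this trace, and div F ≡ 0 if and only if tr( D F̄ · (DX)⁻¹ ) ≡ 0. -/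
open scoped BigOperators
open MeasureTheory

/- ### Auxiliary lemmas -/

lemma pd_of_hasFDerivAt {n : ℕ} {f : (Fin n → ℝ) → ℝ} {f' : (Fin n → ℝ) →L[ℝ] ℝ}
    {x : Fin n → ℝ} (h : HasFDerivAt f f' x) (i : Fin n) :
    pd i f x = f' (Pi.single i 1) := by rw [pd, h.fderiv]

/-- `det` on rows as a continuous multilinear map. -/
noncomputable def detCM (n : ℕ) :
    ContinuousMultilinearMap ℝ (fun _ : Fin n => (Fin n → ℝ)) ℝ where
  toMultilinearMap := (Matrix.detRowAlternating
    : ((Fin n → ℝ) [⋀^Fin n]→ₗ[ℝ] ℝ)).toMultilinearMap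
  cont := by
    exact Continuous.matrix_det (continuous_id : Continuous (id : Matrix (Fin n) (Fin n) ℝ → _))

lemma detCM_apply {n : ℕ} (v : Fin n → (Fin n → ℝ)) :
    detCM n v = Matrix.det (Matrix.of v) := rfl

/-- Derivative formula for the determinant of a matrix with differentiable rows. -/
lemma pd_det_s13 {n : ℕ} (g : Fin n → (Fin n → ℝ) → (Fin n → ℝ))
    (g' : Fin n → ((Fin n → ℝ) →L[ℝ] (Fin n → ℝ))) (x : Fin n → ℝ)
    (hg : ∀ k, HasFDerivAt (g k) (g' k) x) (m : Fin n) :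
    pd m (fun y => Matrix.det (Matrix.of fun k => g k y)) x
      = ∑ k, Matrix.det (Matrix.of
          (Function.update (fun k => g k x) k (g' k (Pi.single m 1)))) := by
  have h := (HasFDerivAt.multilinear_comp (detCM n) hg)
  have heq : (fun y => Matrix.det (Matrix.of fun k => g k y))
      = fun y => (detCM n) fun k => g k y := rfl
  rw [heq, pd_of_hasFDerivAt h m]
  simp [ContinuousLinearMap.sum_apply, detCM_apply]

lemma differentiableAt_det_of_rows {n : ℕ} {M : (Fin n → ℝ) → Matrix (Fin n) (Fin n) ℝ}
    {x : Fin n → ℝ} (h : ∀ k l, DifferentiableAt ℝ (fun y => M y k l) x) :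
    DifferentiableAt ℝ (fun y => (M y).det) x := by
  have hrow : ∀ k, HasFDerivAt (fun y => M y k)
      (ContinuousLinearMap.pi fun l => fderiv ℝ (fun y => M y k l) x) x :=
    fun k => hasFDerivAt_pi.2 fun l => (h k l).hasFDerivAt
  have h2 := HasFDerivAt.multilinear_comp (detCM n) hrow
  exact h2.differentiableAt

lemma sum_antisym_zero {n : ℕ} (q : Fin n → Fin n → ℝ) (h : ∀ i m, q i m = - q m i) :
    ∑ i, ∑ m, q i m = 0 := by
  have h1 : ∑ i, ∑ m, q i m = - ∑ i, ∑ m, q i m := by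
    calc ∑ i, ∑ m, q i m = ∑ m, ∑ i, q i m := Finset.sum_comm
    _ = ∑ m, ∑ i, -(q m i) := by
        refine Finset.sum_congr rfl fun m _ => Finset.sum_congr rfl fun i _ => ?_
        rw [← h]
    _ = - ∑ m, ∑ i, q m i := by simp
  linarith

lemma second_symm {n : ℕ} {f : (Fin n → ℝ) → ℝ} (hf : ContDiff ℝ 2 f)
    (x : Fin n → ℝ) (i m : Fin n) :
    pd i (fun y => pd m f y) x = pd m (fun y => pd i f y) x := by
  have hd : DifferentiableAt ℝ (fderiv ℝ f) x :=
    ((hf.fderiv_right (m := 1) (by norm_num)).differentiable one_ne_zero) x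
  have key : ∀ (r : Fin n) (v : Fin n → ℝ), pd r (fun y => fderiv ℝ f y v) x
      = fderiv ℝ (fderiv ℝ f) x (Pi.single r 1) v := by
    intro r v
    have h : HasFDerivAt (fun y => (ContinuousLinearMap.apply ℝ ℝ v) (fderiv ℝ f y))
        ((ContinuousLinearMap.apply ℝ ℝ v).comp (fderiv ℝ (fderiv ℝ f) x)) x :=
      (ContinuousLinearMap.apply ℝ ℝ v).hasFDerivAt.comp x hd.hasFDerivAt
    exact pd_of_hasFDerivAt h r
  have hsymm : IsSymmSndFDerivAt ℝ f x :=
    (hf.contDiffAt).isSymmSndFDerivAt (by simp [minSmoothness_of_isRCLikeNormedField])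
  have e1 : pd i (fun y => pd m f y) x
      = fderiv ℝ (fderiv ℝ f) x (Pi.single i 1) (Pi.single m 1) := key i (Pi.single m 1)
  have e2 : pd m (fun y => pd i f y) x
      = fderiv ℝ (fderiv ℝ f) x (Pi.single m 1) (Pi.single i 1) := key m (Pi.single i 1)
  rw [e1, e2, hsymm.eq]

lemma jac_entry_contDiff {n : ℕ} {X : (Fin n → ℝ) → (Fin n → ℝ)} (hX : ContDiff ℝ 2 X)
    (k l : Fin n) : ContDiff ℝ 1 (fun y => pd l (fun z => X z k) y) := by
  have h1 : ContDiff ℝ 1 (fderiv ℝ (fun z => X z k)) :=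
    (contDiff_pi.1 hX k).fderiv_right (m := 1) (by norm_num)
  exact h1.clm_apply contDiff_const

/-- The Piola identity: the rows of the adjugate of a Jacobian are divergence free. -/
lemma piola {n : ℕ} {X : (Fin n → ℝ) → (Fin n → ℝ)} (hX : ContDiff ℝ 2 X)
    (j : Fin n) (x : Fin n → ℝ) :
    ∑ i, pd i (fun y => (jacM X y).adjugate i j) x = 0 := by
  classical
  set a : Fin n → Fin n → (Fin n → ℝ) → ℝ :=
    fun k l => pd l (fun z => X z k) with ha_def
  have ha : ∀ k l, ContDiff ℝ 1 (a k l) := fun k l => jac_entry_contDiff hX k l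
  set g : Fin n → Fin n → (Fin n → ℝ) → (Fin n → ℝ) :=
    fun i k y => if k = j then Pi.single i 1 else fun l => a k l y with hg_def
  set g' : Fin n → Fin n → ((Fin n → ℝ) →L[ℝ] (Fin n → ℝ)) :=
    fun _ k => if k = j then 0 else
      ContinuousLinearMap.pi (fun l => fderiv ℝ (a k l) x) with hg'_def
  have hg : ∀ i k, HasFDerivAt (g i k) (g' i k) x := by
    intro i k
    by_cases hk : k = j
    · simpa [hg_def, hg'_def, hk] using
        hasFDerivAt_const (𝕜 := ℝ) (Pi.single i 1 : Fin n → ℝ) x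
    · simp only [hg_def, hg'_def, if_neg hk]
      exact hasFDerivAt_pi.2 fun l => ((ha k l).differentiable one_ne_zero x).hasFDerivAt
  have funeq : ∀ i, (fun y => (jacM X y).adjugate i j)
      = fun y => Matrix.det (Matrix.of fun k => g i k y) := by
    intro i
    funext y
    rw [Matrix.adjugate_apply]
    congr 1
    ext k l
    by_cases hk : k = j <;>
      simp [hg_def, hk, Matrix.updateRow_apply, jacM, ha_def]
  set c : Fin n → (Fin n → ℝ) := fun k l => a k l x with hc_def
  have hgx : ∀ i, (fun k => g i k x) = Function.update c j (Pi.single i 1) := by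
    intro i
    funext k
    by_cases hk : k = j <;> simp [hg_def, hk, Function.update_apply, hc_def]
  have main : ∀ i, pd i (fun y => (jacM X y).adjugate i j) x
      = ∑ k, Matrix.det (Matrix.of (Function.update (Function.update c j (Pi.single i 1)) k
          ((g' i k) (Pi.single i 1)))) := by
    intro i
    rw [funeq i, pd_det_s13 (g i) (g' i) x (hg i) i]
    simp only [hgx i]
  rw [Finset.sum_congr rfl fun i _ => main i]
  rw [Finset.sum_comm]
  refine Finset.sum_eq_zero fun k _ => ?_
  by_cases hk : k = j
  · refine Finset.sum_eq_zero fun i _ => ?_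
    subst hk
    apply Matrix.det_eq_zero_of_row_eq_zero k
    intro l
    simp [hg'_def, Function.update_self]
  · have hrow : ∀ i : Fin n, ((g' i k) (Pi.single i 1) : Fin n → ℝ)
        = ∑ m, (pd i (a k m) x) • (Pi.single m 1 : Fin n → ℝ) := by
      intro i
      funext l
      simp [hg'_def, if_neg hk, ContinuousLinearMap.pi_apply, pd,
        Finset.sum_apply, Pi.single_apply]
    have expand : ∀ i : Fin n,
        Matrix.det (Matrix.of (Function.update (Function.update c j (Pi.single i 1)) k
          ((g' i k) (Pi.single i 1))))
        = ∑ m, (pd i (a k m) x) *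
            Matrix.det (Matrix.of (Function.update (Function.update c j (Pi.single i 1)) k
              (Pi.single m 1))) := by
      intro i
      rw [hrow i]
      have hs := (Matrix.detRowAlternating :
          ((Fin n → ℝ) [⋀^Fin n]→ₗ[ℝ] ℝ)).toMultilinearMap.map_update_sum
        (Finset.univ) k (fun m => (pd i (a k m) x) • (Pi.single m 1 : Fin n → ℝ))
        (Function.update c j (Pi.single i 1))
      refine hs.trans ?_
      refine Finset.sum_congr rfl fun m _ => ?_
      exact (Matrix.detRowAlternating :
          ((Fin n → ℝ) [⋀^Fin n]→ₗ[ℝ] ℝ)).toMultilinearMap.map_update_smul _ k _ _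
    rw [Finset.sum_congr rfl fun i _ => expand i]
    refine sum_antisym_zero _ fun i m => ?_
    have hsym : pd i (a k m) x = pd m (a k i) x :=
      second_symm (contDiff_pi.1 hX k) x i m
    have hanti : Matrix.det (Matrix.of (Function.update (Function.update c j (Pi.single i 1)) k
          (Pi.single m 1)))
        = - Matrix.det (Matrix.of (Function.update (Function.update c j (Pi.single m 1)) k
          (Pi.single i 1))) := by
      have hswap := (Matrix.detRowAlternating :
          ((Fin n → ℝ) [⋀^Fin n]→ₗ[ℝ] ℝ)).map_swap
        (v := Function.update (Function.update c j (Pi.single m 1)) k (Pi.single i 1))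
        (Ne.symm hk)
      have hveq : (Function.update (Function.update c j (Pi.single m 1)) k (Pi.single i 1))
          ∘ (Equiv.swap j k)
          = Function.update (Function.update c j (Pi.single i 1)) k (Pi.single m 1) := by
        funext r
        rcases eq_or_ne r j with rfl | hrj
        · simp [Equiv.swap_apply_left, Function.update_apply, hk, Ne.symm hk]
        · rcases eq_or_ne r k with rfl | hrk
          · simp [Equiv.swap_apply_right, Function.update_apply, hk, Ne.symm hk]
          · simp [Equiv.swap_apply_of_ne_of_ne hrj hrk, Function.update_apply, hrj, hrk]
      rw [← hveq]
      exact hswap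
    rw [hsym, hanti]
    ring

/-- Chain rule for Jacobian matrices. -/
lemma jac_comp {n : ℕ} {X F : (Fin n → ℝ) → (Fin n → ℝ)}
    (hX : ContDiff ℝ 2 X) (hF : ContDiff ℝ 1 F) (x : Fin n → ℝ) :
    jacM (fun y => F (X y)) x = jacM F (X x) * jacM X x := by
  ext i l
  simp only [jacM, Matrix.mul_apply, Matrix.of_apply]
  set Fi := fun z => F z i with hFi_def
  have hFi : ContDiff ℝ 1 Fi := contDiff_pi.1 hF i
  have hXd : DifferentiableAt ℝ X x := (hX.differentiable (by norm_num)) x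
  have hcomp : HasFDerivAt (fun y => Fi (X y))
      ((fderiv ℝ Fi (X x)).comp (fderiv ℝ X x)) x :=
    ((hFi.differentiable one_ne_zero (X x)).hasFDerivAt).comp x hXd.hasFDerivAt
  rw [pd_of_hasFDerivAt hcomp l, ContinuousLinearMap.comp_apply]
  have hXcomp : ∀ k, DifferentiableAt ℝ (fun y => X y k) x :=
    fun k => ((contDiff_pi.1 hX k).differentiable (by norm_num)) x
  have hfd : fderiv ℝ X x
      = ContinuousLinearMap.pi (fun k => fderiv ℝ (fun y => X y k) x) := fderiv_pi hXcomp
  rw [hfd]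
  have hw : (ContinuousLinearMap.pi fun k => fderiv ℝ (fun y => X y k) x) (Pi.single l 1)
      = ∑ k, (pd l (fun y => X y k) x) • (Pi.single k 1 : Fin n → ℝ) := by
    funext r
    simp [ContinuousLinearMap.pi_apply, pd, Finset.sum_apply, Pi.single_apply]
  rw [hw, map_sum]
  refine Finset.sum_congr rfl fun k _ => ?_
  rw [_root_.map_smul]
  simp [pd, smul_eq_mul, mul_comm]

/-- the "magic" formula. -/
theorem magic_formula_lagrangian_divergence {n : ℕ} (hn : 2 ≤ n)
    (e : (Fin n → ℝ) ≃ (Fin n → ℝ))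
    (hX : ContDiff ℝ 2 ⇑e) (hXinv : ContDiff ℝ 2 ⇑e.symm)
    (hJ : ∀ x, 0 < (jacM (⇑e) x).det)
    (F : (Fin n → ℝ) → (Fin n → ℝ)) (hF : ContDiff ℝ 1 F) :
    (∀ x, ((jacM (⇑e) x).det)⁻¹ *
          (∑ i, pd i (fun y => ∑ j, (jacM (⇑e) y).adjugate i j * F (e y) j) x)
        = Matrix.trace (jacM (fun y => F (e y)) x * (jacM (⇑e) x)⁻¹))
    ∧ (∀ x, Matrix.trace (jacM (fun y => F (e y)) x * (jacM (⇑e) x)⁻¹)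
        = ∑ i, ∑ j, jacM (fun y => F (e y)) x i j * (jacM (⇑e) x)⁻¹ j i)
    ∧ (∀ x, vecDiv F (e x)
        = Matrix.trace (jacM (fun y => F (e y)) x * (jacM (⇑e) x)⁻¹))
    ∧ ((∀ y, vecDiv F y = 0) ↔
        (∀ x, Matrix.trace (jacM (fun y => F (e y)) x * (jacM (⇑e) x)⁻¹) = 0)) := by
  classical
  have hdetne : ∀ x, (jacM (⇑e) x).det ≠ 0 := fun x => (hJ x).ne'
  have hjac : ∀ x, jacM (fun y => F (e y)) x = jacM F (e x) * jacM (⇑e) x :=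
    fun x => jac_comp hX hF x
  have hmulinv : ∀ x, jacM (⇑e) x * (jacM (⇑e) x)⁻¹ = 1 :=
    fun x => Matrix.mul_nonsing_inv _ (isUnit_iff_ne_zero.2 (hdetne x))
  have part3 : ∀ x, vecDiv F (e x)
      = Matrix.trace (jacM (fun y => F (e y)) x * (jacM (⇑e) x)⁻¹) := by
    intro x
    rw [hjac x, Matrix.mul_assoc, hmulinv x, Matrix.mul_one]
    simp [vecDiv, Matrix.trace, Matrix.diag, jacM]
  have part2 : ∀ x, Matrix.trace (jacM (fun y => F (e y)) x * (jacM (⇑e) x)⁻¹)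
      = ∑ i, ∑ j, jacM (fun y => F (e y)) x i j * (jacM (⇑e) x)⁻¹ j i := by
    intro x
    simp [Matrix.trace, Matrix.diag, Matrix.mul_apply]
  have part1 : ∀ x, ((jacM (⇑e) x).det)⁻¹ *
      (∑ i, pd i (fun y => ∑ j, (jacM (⇑e) y).adjugate i j * F (e y) j) x)
      = Matrix.trace (jacM (fun y => F (e y)) x * (jacM (⇑e) x)⁻¹) := by
    intro x
    have ha : ∀ k l, ContDiff ℝ 1 (fun y => pd l (fun z => e z k) y) :=
      fun k l => jac_entry_contDiff hX k l
    have hFc : ∀ j, DifferentiableAt ℝ (fun y => F (e y) j) x :=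
      fun j => (((contDiff_pi.1 hF j).differentiable one_ne_zero) _).comp x
        ((hX.differentiable (by norm_num)) x)
    have hadj : ∀ i j', DifferentiableAt ℝ (fun y => (jacM (⇑e) y).adjugate i j') x := by
      intro i j'
      have heq : (fun y => (jacM (⇑e) y).adjugate i j')
          = fun y => ((jacM (⇑e) y).updateRow j' (Pi.single i 1)).det := by
        funext y; rw [Matrix.adjugate_apply]
      rw [heq]
      apply differentiableAt_det_of_rows
      intro k l
      by_cases hk : k = j'
      · simp only [hk, Matrix.updateRow_self]
        exact differentiableAt_const _
      · simp only [Matrix.updateRow_ne hk]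
        exact ((ha k l).differentiable one_ne_zero) x
    have leib : ∀ i, pd i (fun y => ∑ j, (jacM (⇑e) y).adjugate i j * F (e y) j) x
        = ∑ j, ((jacM (⇑e) x).adjugate i j * pd i (fun y => F (e y) j) x
             + F (e x) j * pd i (fun y => (jacM (⇑e) y).adjugate i j) x) := by
      intro i
      have hsum : HasFDerivAt (fun y => ∑ j, (jacM (⇑e) y).adjugate i j * F (e y) j)
          (∑ j, ((jacM (⇑e) x).adjugate i j • fderiv ℝ (fun y => F (e y) j) x
            + F (e x) j • fderiv ℝ (fun y => (jacM (⇑e) y).adjugate i j) x)) x := by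
        apply HasFDerivAt.fun_sum
        intro j _
        exact (hadj i j).hasFDerivAt.mul (hFc j).hasFDerivAt
      rw [pd_of_hasFDerivAt hsum i]
      simp [pd, ContinuousLinearMap.sum_apply]
    rw [Finset.sum_congr rfl fun i _ => leib i]
    rw [Finset.sum_comm]
    have hzero : ∀ j, ∑ i, ((jacM (⇑e) x).adjugate i j * pd i (fun y => F (e y) j) x
        + F (e x) j * pd i (fun y => (jacM (⇑e) y).adjugate i j) x)
        = ∑ i, (jacM (⇑e) x).adjugate i j * pd i (fun y => F (e y) j) x := by
      intro j
      rw [Finset.sum_add_distrib, ← Finset.mul_sum, piola hX j x, mul_zero, add_zero]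
    rw [Finset.sum_congr rfl fun j _ => hzero j]
    -- now relate to the trace
    have hadjinv : (jacM (⇑e) x).adjugate = (jacM (⇑e) x).det • (jacM (⇑e) x)⁻¹ := by
      rw [Matrix.inv_def, Ring.inverse_eq_inv', smul_smul,
        mul_inv_cancel₀ (hdetne x), one_smul]
    have htr : Matrix.trace (jacM (fun y => F (e y)) x * (jacM (⇑e) x).adjugate)
        = ∑ j, ∑ i, (jacM (⇑e) x).adjugate i j * pd i (fun y => F (e y) j) x := by
      simp only [Matrix.trace, Matrix.diag, Matrix.mul_apply, jacM, Matrix.of_apply]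
      refine Finset.sum_congr rfl fun j _ => Finset.sum_congr rfl fun i _ => ?_
      ring
    rw [← htr, hadjinv, Matrix.mul_smul, Matrix.trace_smul, smul_eq_mul,
      inv_mul_cancel_left₀ (hdetne x)]
  refine ⟨part1, part2, part3, ?_⟩
  constructor
  · intro h x
    rw [← part3 x]
    exact h (e x)
  · intro h y
    have h1 := part3 (e.symm y)
    rw [e.apply_symm_apply] at h1
    rw [h1]
    exact h _
end
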